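/- arXiv:2603.17956 — 4 statements merged into one kernel-verified Lean document; each statement's English description precedes it below -/
import Mathlib

section
/- No deterministic classical strategy wins the GHZ–Mermin game: there do not exist functions a, b, c : {0,1} → {0,1} such that for all x, y, z ∈ {0,1} with x ⊕ y ⊕ z = 0, a(x) ⊕ b(y) ⊕ c(z) = x ∨ y ∨ z. -/
theorem no_classical_strategy_wins_GHZ_Mermin :
    ¬ ∃ a b c : Bool → Bool, ∀ x y z : Bool, xor x (xor y z) = false →
      xor (a x) (xor (b y) (c z)) = (x || y || z) := by
  rintro ⟨a, b, c, h⟩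
  have h1 := h false false false (by decide)
  have h2 := h true true false (by decide)
  have h3 := h true false true (by decide)
  have h4 := h false true true (by decide)
  revert h1 h2 h3 h4
  cases a false <;> cases a true <;> cases b false <;> cases b true <;>
    cases c false <;> cases c true <;> decide
end

section
/- Any deterministic classical strategy for the majority game fails on at least two of the eight possible inputs; equivalently, for any functions a, b, c : {0,1} → {0,1}, the number of triples (x,y,z) ∈ {0,1}³ with a(x) ⊕ b(y) ⊕ c(z) = Maj(x,y,z) is at most 6. -/
/-- Majority of three bits: `true` iff at least two of the inputs are `true`. -/
def Maj (x y z : Bool) : Bool := decide (2 ≤ x.toNat + y.toNat + z.toNat)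

theorem classical_majority_wins_at_most_six (a b c : Bool → Bool) :
    (Finset.univ.filter (fun t : Bool × Bool × Bool =>
      xor (a t.1) (xor (b t.2.1) (c t.2.2)) = Maj t.1 t.2.1 t.2.2)).card ≤ 6 := by
  have h : ∀ f : Bool → Bool, f = fun x => bif x then f true else f false := by
    intro f; funext x; cases x <;> simp
  rw [h a, h b, h c]
  cases a true <;> cases a false <;> cases b true <;> cases b false <;>
    cases c true <;> cases c false <;> decide
end

section
/- The magic pentagram is unfillable: if H₁,…,H₅ are five 4-element subsets of a 10-element vertex set such that each vertex lies in exactly two of them, and an odd number of the sets are designated 'odd', then there is no assignment f of bits to vertices such that the sum of f over each hyperedge Hᵢ has the designated parity (0 for 'even' edges, 1 for 'odd' edges). -/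
theorem magic_pentagram_unfillable
    (H : Fin 5 → Finset (Fin 10))
    (hcard : ∀ i, (H i).card = 4)
    (hdeg : ∀ v : Fin 10, (Finset.univ.filter (fun i => v ∈ H i)).card = 2)
    (p : Fin 5 → ZMod 2)
    (hodd : Odd (Finset.univ.filter (fun i => p i = 1)).card) :
    ¬ ∃ f : Fin 10 → ZMod 2, ∀ i, (∑ v ∈ H i, f v) = p i := by
  rintro ⟨f, hf⟩
  have hzero : ∑ i, ∑ v ∈ H i, f v = 0 := by
    have h1 : ∀ i, ∑ v ∈ H i, f v = ∑ v : Fin 10, if v ∈ H i then f v else 0 := by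
      intro i
      rw [Finset.sum_ite_mem, Finset.univ_inter]
    simp only [h1]
    rw [Finset.sum_comm]
    have h2 : ∀ v : Fin 10, (∑ i, if v ∈ H i then f v else 0) = 0 := by
      intro v
      rw [← Finset.sum_filter, Finset.sum_const, hdeg v]
      simp only [two_nsmul]
      exact CharTwo.add_self_eq_zero (f v)
    simp [h2]
  have hone : ∑ i, p i = 1 := by
    have h3 : ∀ x : ZMod 2, x = if x = 1 then 1 else 0 := by decide
    calc ∑ i, p i = ∑ i, if p i = 1 then (1 : ZMod 2) else 0 :=
          Finset.sum_congr rfl (fun i _ => h3 (p i))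
      _ = ((Finset.univ.filter (fun i => p i = 1)).card : ZMod 2) := by
          rw [← Finset.sum_filter, Finset.sum_const, nsmul_eq_mul, mul_one]
      _ = 1 := by
          rw [← ZMod.natCast_mod, (Nat.odd_iff).mp hodd]
          norm_num
  have : (0 : ZMod 2) = 1 := by
    rw [← hzero, ← hone]
    exact Finset.sum_congr rfl (fun i _ => hf i)
  exact absurd this (by decide)
end

section
/- Any nonsignalling strategy for a game with binary inputs in which each player is deterministic on input 1 can be exactly simulated classically: define shared randomness Λ distributed as the joint output distribution on all-zero inputs, and let player i output λ_i on input 0 and â_i on input 1; then for every input x the resulting output distribution equals that of the original nonsignalling strategy. -/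
open Finset

theorem nonsignalling_deterministic_classical_simulation
    {ι : Type} [Fintype ι] [DecidableEq ι]
    {A : ι → Type} [∀ i, Fintype (A i)] [∀ i, DecidableEq (A i)]
    (P : (∀ i, A i) → (ι → Bool) → ℝ)
    (hpos : ∀ a x, 0 ≤ P a x)
    (hnorm : ∀ x, (∑ a : ∀ i, A i, P a x) = 1)
    (hns : ∀ (S : Finset ι) (x x' : ι → Bool), (∀ i ∈ S, x i = x' i) →
      ∀ g : ∀ i, A i,
        (∑ a ∈ univ.filter (fun a : ∀ i, A i => ∀ i ∈ S, a i = g i), P a x) =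
        (∑ a ∈ univ.filter (fun a : ∀ i, A i => ∀ i ∈ S, a i = g i), P a x'))
    (ahat : ∀ i, A i)
    (hdet : ∀ (i : ι) (x : ι → Bool), x i = true → ∀ b : A i,
      (∑ a ∈ univ.filter (fun a : ∀ i, A i => a i = b), P a x) =
        if b = ahat i then 1 else 0) :
    ∀ (x : ι → Bool) (a : ∀ i, A i),
      (∑ l ∈ univ.filter
          (fun l : ∀ i, A i => ∀ i, (if x i = true then ahat i else l i) = a i),
        P l (fun _ => false)) = P a x := by
  have hzero : ∀ (x : ι → Bool) (j : ι), x j = true → ∀ l : ∀ i, A i,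
      l j ≠ ahat j → P l x = 0 := by
    intro x j hj l hlj
    have h := hdet j x hj (l j)
    rw [if_neg hlj] at h
    have hle : P l x ≤ ∑ a ∈ univ.filter (fun a : ∀ i, A i => a j = l j), P a x :=
      Finset.single_le_sum (fun a _ => hpos a x) (by simp)
    have h0 := hpos l x
    linarith
  intro x a
  by_cases hall : ∀ i, x i = true → a i = ahat i
  · have hfeq : (univ.filter (fun l : ∀ i, A i =>
        ∀ i, (if x i = true then ahat i else l i) = a i))
        = univ.filter (fun l : ∀ i, A i =>
            ∀ i ∈ univ.filter (fun i => x i = false), l i = a i) := by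
      apply Finset.filter_congr
      intro l _
      simp only [mem_filter, mem_univ, true_and]
      constructor
      · intro h i hi
        have := h i
        rw [if_neg (by simp [hi])] at this
        exact this
      · intro h i
        cases hx : x i with
        | true =>
            simpa using (hall i hx).symm
        | false =>
            simpa using h i hx
    rw [hfeq, hns (univ.filter fun i => x i = false) (fun _ => false) x
      (by intro i hi; simp only [mem_filter, mem_univ, true_and] at hi; simp [hi]) a]
    apply Finset.sum_eq_single_of_mem
    · simp
    · intro l hl hla
      simp only [mem_filter, mem_univ, true_and] at hl
      obtain ⟨j, hj⟩ := Function.ne_iff.mp hla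
      have hxj : x j = true := by
        by_contra hxj
        exact hj (hl j (by simp at hxj ⊢; exact hxj))
      exact hzero x j hxj l (by rw [← hall j hxj]; exact hj)
  · push_neg at hall
    obtain ⟨j, hj, hne⟩ := hall
    rw [Finset.sum_eq_zero, (hzero x j hj a hne).symm]
    intro l hl
    simp only [mem_filter, mem_univ, true_and] at hl
    have := hl j
    rw [if_pos hj] at this
    exact (hne this.symm).elim
end
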